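/- Let R be a commutative ring, V an R-module, and φ_1, φ_2, φ_3: V → R three R-linear maps. Define the alternating trilinear form Λ(x,y,z) = det((φ_p applied to (x,y,z))_{p=1,2,3}), the 3×3 determinant of the matrix with entries φ_p(x), φ_p(y), φ_p(z). Then for all a, b, c, b', c' ∈ V: Λ(b,c,c')·Λ(a,c,b')·Λ(b,b',c') + Λ(b,c,b')·Λ(c,b',c')·Λ(a,b,c') − Λ(b,c,b')·Λ(a,c,c')·Λ(b,b',c') − Λ(b,c,c')·Λ(c,b',c')·Λ(a,b,b') = 0. -/
import Mathlib

theorem plucker_identity_for_alternating_three_form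
    {R : Type*} [CommRing R] {V : Type*} [AddCommGroup V] [Module R V]
    (φ : Fin 3 → V →ₗ[R] R) (Λ : V → V → V → R)
    (hΛ : ∀ x y z : V,
      Λ x y z = Matrix.det (Matrix.of fun p q : Fin 3 => φ p (![x, y, z] q)))
    (a b c b' c' : V) :
    Λ b c c' * Λ a c b' * Λ b b' c' + Λ b c b' * Λ c b' c' * Λ a b c' -
        Λ b c b' * Λ a c c' * Λ b b' c' - Λ b c c' * Λ c b' c' * Λ a b b' = 0 := by
  simp only [hΛ, Matrix.det_fin_three, Matrix.of_apply]
  simp only [Matrix.cons_val', Matrix.cons_val_zero, Matrix.cons_val_one, Matrix.head_cons,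
    Matrix.empty_val', Matrix.cons_val_fin_one, Matrix.head_fin_const, Matrix.cons_val_two,
    Matrix.tail_cons]
  ring
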